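/- The number e(X,P) of idempotents of T(X,P) satisfies the recurrence: e(∅,∅) = 1, and for nonempty X, e(X,P) = Σ_A e(X_{A^c}, P_{A^c}) · Σ_{a∈A} Σ_{l=1}^{n_a} C(n_a, l) · l^{n_A − l}, where the outer sum runs over all subsets A ⊆ [m] containing 1, A^c = [m] \ A, n_A = Σ_{a∈A} n_a, and X_{A^c}, P_{A^c} denote the union of the blocks indexed by A^c and the induced partition. -/

import Mathlib

open Finset

/-- The number of idempotents of `T(X,P)`, for `X = Σ q : ι, Fin (n q)` with blocks
`C_q = {q} × [n_q]`. -/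
noncomputable def numIdem (ι : Type) [Fintype ι] (n : ι → ℕ) : ℕ :=
  Nat.card {f : (Σ q : ι, Fin (n q)) → (Σ q : ι, Fin (n q)) //
    (∀ q : ι, ∃ r : ι, ∀ x : Σ q : ι, Fin (n q), x.1 = q → (f x).1 = r) ∧ f ∘ f = f}



section CountLemma

variable {Y : Type} [Fintype Y] [DecidableEq Y]

/-- Count idempotents of `Y → Y` with range inside a given finset `B`. -/
lemma countIdemRange [Nonempty Y] (B : Finset Y) :
    Nat.card {g : Y → Y // (∀ x, g x ∈ B) ∧ g ∘ g = g} =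
      ∑ l ∈ Finset.Icc 1 B.card, B.card.choose l * l ^ (Fintype.card Y - l) := by
  classical
  rw [Nat.card_eq_fintype_card, Fintype.card_subtype]
  rw [Finset.card_eq_sum_card_fiberwise
      (f := fun g : Y → Y => univ.filter (fun x => g x = x))
      (t := B.powerset.filter Finset.Nonempty)
      (by
        intro g hg
        simp only [Finset.mem_coe, mem_filter, mem_univ, true_and] at hg
        obtain ⟨hB, hidem⟩ := hg
        simp only [Finset.mem_coe, mem_filter, mem_powerset]
        constructor
        · intro x hx
          simp only [mem_filter, mem_univ, true_and] at hx
          rw [← hx]; exact hB x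
        · refine ⟨g (Classical.arbitrary Y), ?_⟩
          simp only [mem_filter, mem_univ, true_and]
          exact congrFun hidem (Classical.arbitrary Y))]
  have hfiber : ∀ S ∈ B.powerset.filter Finset.Nonempty,
      ((univ.filter (fun g : Y → Y => (∀ x, g x ∈ B) ∧ g ∘ g = g)).filter
        (fun g => univ.filter (fun x => g x = x) = S)).card
      = S.card ^ (Fintype.card Y - S.card) := by
    intro S hS
    simp only [mem_filter, mem_powerset] at hS
    obtain ⟨hSB, -⟩ := hS
    have hset : ((univ.filter (fun g : Y → Y => (∀ x, g x ∈ B) ∧ g ∘ g = g)).filter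
        (fun g => univ.filter (fun x => g x = x) = S)) =
        univ.filter (fun g : Y → Y => ∀ x, g x ∈ (if x ∈ S then {x} else S)) := by
      ext g
      simp only [mem_filter, mem_univ, true_and]
      constructor
      · rintro ⟨⟨hB, hidem⟩, hfix⟩ x
        by_cases hx : x ∈ S
        · rw [← hfix] at hx
          simp only [mem_filter, mem_univ, true_and] at hx
          rw [if_pos]
          · simp [hx]
          · rw [← hfix]; simp only [mem_filter, mem_univ, true_and]; exact hx
        · simp only [if_neg hx]
          rw [← hfix]
          simp only [mem_filter, mem_univ, true_and]
          exact congrFun hidem x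
      · intro hg
        have hfixval : ∀ x ∈ S, g x = x := by
          intro x hx; have := hg x; rw [if_pos hx] at this; simpa using this
        have hout : ∀ x, x ∉ S → g x ∈ S := by
          intro x hx; have := hg x; rwa [if_neg hx] at this
        have hgS : ∀ x, g x ∈ S := by
          intro x; by_cases hx : x ∈ S
          · rw [hfixval x hx]; exact hx
          · exact hout x hx
        refine ⟨⟨fun x => hSB (hgS x), funext fun x => ?_⟩, ?_⟩
        · exact hfixval (g x) (hgS x)
        · ext x
          simp only [mem_filter, mem_univ, true_and]
          constructor
          · intro hgx
            by_cases hx : x ∈ S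
            · exact hx
            · rw [← hgx]; exact hout x hx
          · exact hfixval x
    rw [hset, ← Fintype.card_subtype]
    rw [Fintype.card_congr (Equiv.subtypePiEquivPi (p := fun x (y : Y) =>
      y ∈ (if x ∈ S then ({x} : Finset Y) else S)))]
    rw [Fintype.card_pi]
    have : ∀ x : Y, Fintype.card {y // y ∈ (if x ∈ S then ({x} : Finset Y) else S)}
        = if x ∈ S then 1 else S.card := by
      intro x
      split_ifs with hx <;> simp [Fintype.card_subtype, filter_univ_mem]
    simp only [this]
    rw [Finset.prod_ite (f := fun _ : Y => 1) (g := fun _ : Y => S.card)]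
    rw [Finset.prod_const, Finset.prod_const, one_pow, one_mul]
    congr 1
    have : univ.filter (fun x => ¬ x ∈ S) = Sᶜ := by ext x; simp
    rw [this, Finset.card_compl]
  rw [Finset.sum_congr rfl hfiber]
  rw [Finset.sum_filter, Finset.sum_powerset]
  rw [← Finset.sum_subset (s₁ := Finset.Icc 1 B.card)
      (fun j hj => by
        simp only [Finset.mem_Icc] at hj
        simp only [Finset.mem_range]
        omega)
      (fun j hj hj' => by
        simp only [Finset.mem_range] at hj
        simp only [Finset.mem_Icc] at hj'
        have : j = 0 := by omega
        subst this
        simp)]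
  refine Finset.sum_congr rfl fun j hj => ?_
  simp only [Finset.mem_Icc] at hj
  have : ∀ S ∈ powersetCard j B,
      (if S.Nonempty then S.card ^ (Fintype.card Y - S.card) else 0)
      = j ^ (Fintype.card Y - j) := by
    intro S hS
    rw [Finset.mem_powersetCard] at hS
    have hcard : S.card = j := hS.2
    have : S.Nonempty := by rw [← Finset.card_pos, hcard]; omega
    rw [if_pos this, hcard]
  rw [Finset.sum_congr rfl this, Finset.sum_const, Finset.card_powersetCard, smul_eq_mul]

end CountLemma


section Pieces

variable {ι : Type} [Fintype ι] [DecidableEq ι] (n : ι → ℕ)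

/-- `X = Σ q, Fin (n q)` restricted to blocks satisfying `p`. -/
def sigmaSubtype (p : ι → Prop) :
    (Σ q : Subtype p, Fin (n q.1)) ≃ {x : Σ q : ι, Fin (n q) // p x.1} where
  toFun y := ⟨⟨y.1.1, y.2⟩, y.1.2⟩
  invFun x := ⟨⟨x.1.1, x.2⟩, x.1.2⟩
  left_inv := fun ⟨⟨q, hq⟩, v⟩ => rfl
  right_inv := fun ⟨⟨q, v⟩, hx⟩ => rfl

lemma card_sigmaSubtype_finset (A : Finset ι) :
    Fintype.card {x : Σ q : ι, Fin (n q) // x.1 ∈ A} = ∑ b ∈ A, n b := by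
  classical
  rw [← Fintype.card_congr (sigmaSubtype n (fun q => q ∈ A))]
  rw [Fintype.card_sigma]
  simp only [Fintype.card_fin]
  exact Finset.sum_coe_sort A n

lemma card_block (A : Finset ι) (a : ι) (ha : a ∈ A) :
    Fintype.card {y : {x : Σ q : ι, Fin (n q) // x.1 ∈ A} // y.1.1 = a} = n a := by
  classical
  rw [← Fintype.card_fin (n a)]
  refine (Fintype.card_congr (Equiv.ofBijective
    (fun v : Fin (n a) => (⟨⟨⟨a, v⟩, ha⟩, rfl⟩ :
      {y : {x : Σ q : ι, Fin (n q) // x.1 ∈ A} // y.1.1 = a})) ⟨?_, ?_⟩)).symm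
  · intro v w hvw
    have : (⟨a, v⟩ : Σ q : ι, Fin (n q)) = ⟨a, w⟩ := congrArg (fun z => z.1.1) hvw
    simpa using this
  · rintro ⟨⟨⟨q, v⟩, hq⟩, hy⟩
    dsimp at hy
    subst hy
    exact ⟨v, rfl⟩

end Pieces

section Layer2

variable {ι : Type} [Fintype ι] [DecidableEq ι] (n : ι → ℕ)

lemma countCond2 (A : Finset ι) (h : ∀ q, 1 ≤ n q) (q0 : ι) (h0 : q0 ∈ A) :
    Nat.card {g : {x : Σ q : ι, Fin (n q) // x.1 ∈ A} → {x : Σ q : ι, Fin (n q) // x.1 ∈ A} //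
        (∃ a ∈ A, ∀ x, (g x).1.1 = a) ∧ g ∘ g = g} =
      ∑ a ∈ A, ∑ l ∈ Finset.Icc 1 (n a),
        (n a).choose l * l ^ ((∑ b ∈ A, n b) - l) := by
  classical
  set XA := {x : Σ q : ι, Fin (n q) // x.1 ∈ A} with hXA
  have x0 : XA := ⟨⟨q0, ⟨0, h q0⟩⟩, h0⟩
  haveI : Nonempty XA := ⟨x0⟩
  have e : (Σ a : {a : ι // a ∈ A}, {g : XA → XA // (∀ x, (g x).1.1 = a.1) ∧ g ∘ g = g}) ≃
      {g : XA → XA // (∃ a ∈ A, ∀ x, (g x).1.1 = a) ∧ g ∘ g = g} := by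
    refine Equiv.ofBijective
      (fun z => ⟨z.2.1, ⟨z.1.1, z.1.2, z.2.2.1⟩, z.2.2.2⟩) ⟨?_, ?_⟩
    · rintro ⟨⟨a, ha⟩, ⟨g, hg1, hg2⟩⟩ ⟨⟨a', ha'⟩, ⟨g', hg1', hg2'⟩⟩ heq
      have hgg : g = g' := congrArg Subtype.val heq
      subst hgg
      have haa : a = a' := (hg1 x0).symm.trans (hg1' x0)
      subst haa
      rfl
    · rintro ⟨g, ⟨a, ha, hg1⟩, hg2⟩
      exact ⟨⟨⟨a, ha⟩, ⟨g, hg1, hg2⟩⟩, rfl⟩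
  rw [← Nat.card_congr e, Nat.card_eq_fintype_card, Fintype.card_sigma]
  rw [← Finset.sum_coe_sort A]
  refine Finset.sum_congr rfl fun a _ => ?_
  have := countIdemRange (Y := XA) (univ.filter (fun y : XA => y.1.1 = a.1))
  rw [Nat.card_eq_fintype_card] at this
  have hB : (univ.filter (fun y : XA => y.1.1 = a.1)).card = n a.1 := by
    rw [← Fintype.card_subtype]
    exact card_block n A a.1 a.2
  rw [hB] at this
  have hcardXA : Fintype.card XA = ∑ b ∈ A, n b := card_sigmaSubtype_finset n A
  rw [hcardXA] at this
  rw [← this]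
  refine Fintype.card_congr (Equiv.subtypeEquivRight fun g => ?_)
  constructor
  · rintro ⟨hg1, hg2⟩
    exact ⟨fun x => by simp [hg1 x], hg2⟩
  · rintro ⟨hg1, hg2⟩
    refine ⟨fun x => ?_, hg2⟩
    have := hg1 x
    simpa using this

end Layer2



section Glue

variable {ι : Type} [Fintype ι] [DecidableEq ι]

def glueFun (n : ι → ℕ) (A : Finset ι)
    (g1 : (Σ q : {q : ι // q ∈ Aᶜ}, Fin (n q.1)) → (Σ q : {q : ι // q ∈ Aᶜ}, Fin (n q.1)))
    (g2 : {x : Σ q : ι, Fin (n q) // x.1 ∈ A} → {x : Σ q : ι, Fin (n q) // x.1 ∈ A})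
    (x : Σ q : ι, Fin (n q)) : Σ q : ι, Fin (n q) :=
  if hx : x.1 ∈ A then (g2 ⟨x, hx⟩).1
  else ⟨(g1 ⟨⟨x.1, Finset.mem_compl.mpr hx⟩, x.2⟩).1.1,
        (g1 ⟨⟨x.1, Finset.mem_compl.mpr hx⟩, x.2⟩).2⟩

lemma glueFun_pos (n : ι → ℕ) (A : Finset ι) (g1) (g2) (x : Σ q : ι, Fin (n q))
    (hx : x.1 ∈ A) : glueFun n A g1 g2 x = (g2 ⟨x, hx⟩).1 := dif_pos hx

lemma glueFun_neg (n : ι → ℕ) (A : Finset ι) (g1) (g2) (x : Σ q : ι, Fin (n q))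
    (hx : ¬ x.1 ∈ A) : glueFun n A g1 g2 x =
      ⟨(g1 ⟨⟨x.1, Finset.mem_compl.mpr hx⟩, x.2⟩).1.1,
       (g1 ⟨⟨x.1, Finset.mem_compl.mpr hx⟩, x.2⟩).2⟩ := dif_neg hx

lemma backEq (n : ι → ℕ) {A : Finset ι} {u u' : Σ q : {q : ι // q ∈ Aᶜ}, Fin (n q.1)}
    (huu : (⟨u.1.1, u.2⟩ : Σ q : ι, Fin (n q)) = ⟨u'.1.1, u'.2⟩) : u = u' := by
  obtain ⟨⟨q, hq⟩, v⟩ := u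
  obtain ⟨⟨q', hq'⟩, v'⟩ := u'
  obtain ⟨h1, h2⟩ := Sigma.mk.inj_iff.mp huu
  dsimp only at h1 h2
  subst h1
  have h2' : v = v' := eq_of_heq h2
  subst h2'
  rfl

lemma packEq (n : ι → ℕ) {A : Finset ι} {w w' : Σ q : ι, Fin (n q)} (hww : w = w')
    (p : w.1 ∈ Aᶜ) (p' : w'.1 ∈ Aᶜ) :
    (⟨⟨w.1, p⟩, w.2⟩ : Σ q : {q : ι // q ∈ Aᶜ}, Fin (n q.1)) = ⟨⟨w'.1, p'⟩, w'.2⟩ := by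
  subst hww; rfl

lemma glue_prop1 (n : ι → ℕ) (A : Finset ι) (g1) (g2)
    (hg1b : ∀ q : {q : ι // q ∈ Aᶜ}, ∃ r : {q : ι // q ∈ Aᶜ},
      ∀ x : Σ q : {q : ι // q ∈ Aᶜ}, Fin (n q.1), x.1 = q → (g1 x).1 = r)
    (hg1i : g1 ∘ g1 = g1)
    (hg2e : ∃ a ∈ A, ∀ x : {x : Σ q : ι, Fin (n q) // x.1 ∈ A}, ((g2 x).1).1 = a)
    (hg2i : g2 ∘ g2 = g2) :
    (∀ q : ι, ∃ r : ι, ∀ x : Σ q : ι, Fin (n q), x.1 = q → (glueFun n A g1 g2 x).1 = r) ∧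
      glueFun n A g1 g2 ∘ glueFun n A g1 g2 = glueFun n A g1 g2 := by
  constructor
  · intro q
    by_cases hq : q ∈ A
    · obtain ⟨a, haA, hga⟩ := hg2e
      refine ⟨a, fun x hx => ?_⟩
      have hxA : x.1 ∈ A := by rw [hx]; exact hq
      rw [glueFun_pos n A g1 g2 x hxA]
      exact hga ⟨x, hxA⟩
    · obtain ⟨r, hr⟩ := hg1b ⟨q, Finset.mem_compl.mpr hq⟩
      refine ⟨r.1, fun x hx => ?_⟩
      have hxA : ¬ x.1 ∈ A := by rw [hx]; exact hq
      rw [glueFun_neg n A g1 g2 x hxA]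
      exact congrArg Subtype.val
        (hr ⟨⟨x.1, Finset.mem_compl.mpr hxA⟩, x.2⟩ (Subtype.ext hx))
  · funext x
    show glueFun n A g1 g2 (glueFun n A g1 g2 x) = glueFun n A g1 g2 x
    by_cases hx : x.1 ∈ A
    · rw [glueFun_pos n A g1 g2 x hx]
      have h2 : ((g2 ⟨x, hx⟩).1).1 ∈ A := (g2 ⟨x, hx⟩).2
      rw [glueFun_pos n A g1 g2 _ h2]
      exact congrArg Subtype.val (congrFun hg2i ⟨x, hx⟩)
    · rw [glueFun_neg n A g1 g2 x hx]
      set z' : Σ q : {q : ι // q ∈ Aᶜ}, Fin (n q.1) :=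
        ⟨⟨x.1, Finset.mem_compl.mpr hx⟩, x.2⟩ with hz'
      have h2 : ¬ ((⟨(g1 z').1.1, (g1 z').2⟩ : Σ q : ι, Fin (n q)).1 ∈ A) :=
        Finset.mem_compl.mp (g1 z').1.2
      rw [glueFun_neg n A g1 g2 _ h2]
      show (⟨(g1 (g1 z')).1.1, (g1 (g1 z')).2⟩ : Σ q : ι, Fin (n q)) = _
      have h3 : g1 (g1 z') = g1 z' := congrFun hg1i z'
      rw [h3]

lemma glue_prop2 (n : ι → ℕ) (h : ∀ q, 1 ≤ n q) (q0 : ι) (A : Finset ι) (hA : q0 ∈ A)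
    (g1) (g2)
    (hg2e : ∃ a ∈ A, ∀ x : {x : Σ q : ι, Fin (n q) // x.1 ∈ A}, ((g2 x).1).1 = a) :
    ∀ q : ι, ((glueFun n A g1 g2 ⟨q, ⟨0, h q⟩⟩).1 = (glueFun n A g1 g2 ⟨q0, ⟨0, h q0⟩⟩).1
      ↔ q ∈ A) := by
  obtain ⟨a, haA, hga⟩ := hg2e
  have hq0 : (glueFun n A g1 g2 ⟨q0, ⟨0, h q0⟩⟩).1 = a := by
    rw [glueFun_pos n A g1 g2 _ hA]
    exact hga _
  intro q
  rw [hq0]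
  by_cases hq : q ∈ A
  · simp only [hq, iff_true]
    rw [glueFun_pos n A g1 g2 _ hq]
    exact hga _
  · simp only [hq, iff_false]
    rw [glueFun_neg n A g1 g2 _ hq]
    intro heq
    dsimp only at heq
    have hmem := (g1 ⟨⟨q, Finset.mem_compl.mpr hq⟩, ⟨0, h q⟩⟩).1.2
    rw [heq] at hmem
    exact Finset.mem_compl.mp hmem haA

lemma fiberCount (n : ι → ℕ) (h : ∀ q, 1 ≤ n q) (q0 : ι) (A : Finset ι) (hA : q0 ∈ A) :
    Nat.card {f : (Σ q : ι, Fin (n q)) → (Σ q : ι, Fin (n q)) //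
        ((∀ q : ι, ∃ r : ι, ∀ x : Σ q : ι, Fin (n q), x.1 = q → (f x).1 = r) ∧ f ∘ f = f) ∧
        ∀ q : ι, ((f ⟨q, ⟨0, h q⟩⟩).1 = (f ⟨q0, ⟨0, h q0⟩⟩).1 ↔ q ∈ A)} =
      numIdem {q : ι // q ∈ Aᶜ} (fun q => n q.1) *
        Nat.card {g : {x : Σ q : ι, Fin (n q) // x.1 ∈ A} → {x : Σ q : ι, Fin (n q) // x.1 ∈ A} //
          (∃ a ∈ A, ∀ x, (g x).1.1 = a) ∧ g ∘ g = g} := by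
  classical
  rw [numIdem, ← Nat.card_prod]
  refine (Nat.card_eq_of_bijective
    (fun z => ⟨glueFun n A z.1.1 z.2.1,
      glue_prop1 n A z.1.1 z.2.1 z.1.2.1 z.1.2.2 z.2.2.1 z.2.2.2,
      glue_prop2 n h q0 A hA z.1.1 z.2.1 z.2.2.1⟩) ⟨?_, ?_⟩).symm
  · -- injectivity
    rintro ⟨⟨g1, hg1⟩, ⟨g2, hg2⟩⟩ ⟨⟨g1', hg1'⟩, ⟨g2', hg2'⟩⟩ heq
    have hg : glueFun n A g1 g2 = glueFun n A g1' g2' :=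
      congrArg Subtype.val heq
    have e2 : g2 = g2' := by
      funext y
      apply Subtype.ext
      have hy := congrFun hg y.1
      rw [glueFun_pos n A g1 g2 y.1 y.2, glueFun_pos n A g1' g2' y.1 y.2] at hy
      exact hy
    have e1 : g1 = g1' := by
      funext z
      have h2 : ¬ ((⟨z.1.1, z.2⟩ : Σ q : ι, Fin (n q)).1 ∈ A) := Finset.mem_compl.mp z.1.2
      have hz := congrFun hg ⟨z.1.1, z.2⟩
      rw [glueFun_neg n A g1 g2 _ h2, glueFun_neg n A g1' g2' _ h2] at hz
      exact backEq n hz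
    subst e1
    subst e2
    rfl
  · -- surjectivity
    rintro ⟨f, ⟨hfb, hfi⟩, hfib⟩
    have hblock : ∀ x : Σ q : ι, Fin (n q), (f x).1 = (f ⟨x.1, ⟨0, h x.1⟩⟩).1 := by
      intro x
      obtain ⟨r, hr⟩ := hfb x.1
      rw [hr x rfl, hr ⟨x.1, ⟨0, h x.1⟩⟩ rfl]
    set sig : ι → ι := fun q => (f ⟨q, ⟨0, h q⟩⟩).1 with hsig
    have hsigidem : ∀ q, sig (sig q) = sig q := by
      intro q
      have h2 := congrArg Sigma.fst (congrFun hfi ⟨q, ⟨0, h q⟩⟩)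
      simp only [Function.comp_apply] at h2
      rw [hblock (f ⟨q, ⟨0, h q⟩⟩)] at h2
      exact h2
    have ha0 : sig q0 ∈ A := (hfib (sig q0)).mp (hsigidem q0)
    have hfA : ∀ q, q ∈ A → sig q = sig q0 := fun q hq => (hfib q).mpr hq
    have hnA : ∀ q, q ∉ A → sig q ∉ A := by
      intro q hq hmem
      have h1 : sig (sig q) = sig q0 := (hfib (sig q)).mpr hmem
      rw [hsigidem q] at h1
      exact hq ((hfib q).mp h1)
    refine ⟨⟨⟨fun z => ⟨⟨(f ⟨z.1.1, z.2⟩).1,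
        Finset.mem_compl.mpr (by
          rw [hblock ⟨z.1.1, z.2⟩]
          exact hnA z.1.1 (Finset.mem_compl.mp z.1.2))⟩,
        (f ⟨z.1.1, z.2⟩).2⟩, ?_, ?_⟩,
      ⟨fun y => ⟨f y.1, by
          rw [hblock y.1]
          show sig y.1.1 ∈ A
          rw [hfA y.1.1 y.2]
          exact ha0⟩, ?_, ?_⟩⟩, Subtype.ext ?_⟩
    · -- block property of g1
      intro q'
      refine ⟨⟨sig q'.1, Finset.mem_compl.mpr (hnA q'.1 (Finset.mem_compl.mp q'.2))⟩,
        fun z hz => ?_⟩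
      apply Subtype.ext
      show (f ⟨z.1.1, z.2⟩).1 = sig q'.1
      rw [hblock ⟨z.1.1, z.2⟩]
      exact congrArg sig (congrArg Subtype.val hz)
    · -- idempotency of g1
      funext z
      exact packEq n (congrFun hfi ⟨z.1.1, z.2⟩) _ _
    · -- single-block condition of g2
      exact ⟨sig q0, ha0, fun y => by
        show (f y.1).1 = sig q0
        rw [hblock y.1]
        exact hfA y.1.1 y.2⟩
    · -- idempotency of g2
      funext y
      exact Subtype.ext (congrFun hfi y.1)
    · -- the glued map equals f
      funext x
      by_cases hx : x.1 ∈ A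
      · exact glueFun_pos n A _ _ x hx
      · exact glueFun_neg n A _ _ x hx

end Glue

/-- Recurrence for `e(X,P) = |E(T(X,P))|`: it is `1` for empty `X`, and for nonempty `X`,
`e(X,P) = Σ_A e(X_{A^c},P_{A^c}) Σ_{a∈A} Σ_{l=1}^{n_a} C(n_a,l) l^{n_A−l}`, the outer sum over
all `A ⊆ [m]` containing the first block index. -/
theorem numIdem_recurrence :
    (∀ n : Fin 0 → ℕ, numIdem (Fin 0) n = 1) ∧
    (∀ (m : ℕ) (n : Fin (m + 1) → ℕ), (∀ q, 1 ≤ n q) →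
      numIdem (Fin (m + 1)) n =
        ∑ A ∈ Finset.univ.powerset.filter (fun A : Finset (Fin (m + 1)) => 0 ∈ A),
          numIdem {q : Fin (m + 1) // q ∈ Aᶜ} (fun q => n q.1) *
            ∑ a ∈ A, ∑ l ∈ Finset.Icc 1 (n a),
              Nat.choose (n a) l * l ^ ((∑ b ∈ A, n b) - l)) := by
  constructor
  · intro n
    unfold numIdem
    haveI : IsEmpty (Σ q : Fin 0, Fin (n q)) := ⟨fun x => x.1.elim0⟩
    haveI : Unique {f : (Σ q : Fin 0, Fin (n q)) → (Σ q : Fin 0, Fin (n q)) //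
        (∀ q : Fin 0, ∃ r : Fin 0, ∀ x : Σ q : Fin 0, Fin (n q), x.1 = q → (f x).1 = r) ∧
          f ∘ f = f} :=
      { default := ⟨id, fun q => q.elim0, rfl⟩
        uniq := fun f => Subtype.ext (funext fun x => isEmptyElim x) }
    exact Nat.card_unique
  · intro m n h
    classical
    unfold numIdem
    rw [Nat.card_eq_fintype_card, Fintype.card_subtype]
    rw [Finset.card_eq_sum_card_fiberwise
      (f := fun f : (Σ q : Fin (m + 1), Fin (n q)) → (Σ q : Fin (m + 1), Fin (n q)) =>
        univ.filter (fun q => (f ⟨q, ⟨0, h q⟩⟩).1 = (f ⟨0, ⟨0, h 0⟩⟩).1))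
      (t := Finset.univ.powerset.filter (fun A : Finset (Fin (m + 1)) => 0 ∈ A))
      (by
        intro f hf
        simp only [Finset.mem_coe, Finset.mem_filter, Finset.mem_powerset]
        exact ⟨Finset.subset_univ _, by simp⟩)]
    refine Finset.sum_congr rfl fun A hA => ?_
    have hA0 : (0 : Fin (m + 1)) ∈ A := (Finset.mem_filter.mp hA).2
    rw [Finset.filter_filter, ← Fintype.card_subtype, ← Nat.card_eq_fintype_card]
    have e : {f : (Σ q : Fin (m + 1), Fin (n q)) → (Σ q : Fin (m + 1), Fin (n q)) //
        ((∀ q : Fin (m + 1), ∃ r : Fin (m + 1), ∀ x : Σ q : Fin (m + 1), Fin (n q),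
          x.1 = q → (f x).1 = r) ∧ f ∘ f = f) ∧
        univ.filter (fun q => (f ⟨q, ⟨0, h q⟩⟩).1 = (f ⟨0, ⟨0, h 0⟩⟩).1) = A} ≃
      {f : (Σ q : Fin (m + 1), Fin (n q)) → (Σ q : Fin (m + 1), Fin (n q)) //
        ((∀ q : Fin (m + 1), ∃ r : Fin (m + 1), ∀ x : Σ q : Fin (m + 1), Fin (n q),
          x.1 = q → (f x).1 = r) ∧ f ∘ f = f) ∧
        ∀ q : Fin (m + 1), ((f ⟨q, ⟨0, h q⟩⟩).1 = (f ⟨0, ⟨0, h 0⟩⟩).1 ↔ q ∈ A)} := by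
      refine Equiv.subtypeEquivRight fun f => and_congr_right fun _ => ?_
      constructor
      · intro hEq q
        rw [← hEq]
        simp
      · intro hq
        ext q
        simp [hq q]
    rw [Nat.card_congr e, fiberCount n h 0 A hA0, countCond2 n A h 0 hA0]
    rfl
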